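/- Let d ≥ 1 and let A = (a_{ij}) be a d×d matrix over ℝ (indices 1,…,d). For each i let N_i = 1 − E_{ii}·A, i.e. the matrix whose i-th row is (−a_{i1},…, 1−a_{ii},…, −a_{id}) and whose other rows agree with the identity; N_i is the matrix of the pseudo-reflexion s_i(e_j) = e_j − a_{ij}e_i. Let L be the lower triangular part of A including the diagonal (L_{ij} = a_{ij} for i ≥ j, 0 otherwise) and W the strictly upper triangular part of A (W_{ij} = a_{ij} for i < j, 0 otherwise), so A = L + W. Then 1 + W is invertible and N_1 · N_2 ⋯ N_d = (1 + W)⁻¹ · (1 − L); i.e. the Coxeter element, the composition of all the pseudo-reflexions taken with N_d applied first, equals (1 + W)⁻¹(1 − L). -/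

import Mathlib

open Matrix

private def Wk (d : ℕ) (A : Matrix (Fin d) (Fin d) ℝ) (k : ℕ) : Matrix (Fin d) (Fin d) ℝ :=
  Matrix.of fun i j => if k ≤ i.val ∧ i.val < j.val then A i j else 0

private def Lk (d : ℕ) (A : Matrix (Fin d) (Fin d) ℝ) (k : ℕ) : Matrix (Fin d) (Fin d) ℝ :=
  Matrix.of fun i j => if k ≤ i.val ∧ j.val ≤ i.val then A i j else 0

private lemma key (d : ℕ) (A : Matrix (Fin d) (Fin d) ℝ)
    (N : Fin d → Matrix (Fin d) (Fin d) ℝ)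
    (hN : ∀ i, N i = 1 - Matrix.single i i 1 * A) :
    ∀ j k, k + j = d →
      (1 + Wk d A k) * ((((List.finRange d).drop k).map N).prod) = 1 - Lk d A k := by
  intro j
  induction j with
  | zero =>
    intro k hk
    have hk' : k = d := by omega
    subst hk'
    have h1 : (List.finRange k).drop k = [] := by
      apply List.drop_eq_nil_of_le; simp
    have h2 : Wk k A k = 0 := by
      ext i jj; simp only [Wk, Matrix.of_apply, Matrix.zero_apply]
      have := i.isLt
      rw [if_neg (by omega)]
    have h3 : Lk k A k = 0 := by
      ext i jj; simp only [Lk, Matrix.of_apply, Matrix.zero_apply]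
      have := i.isLt
      rw [if_neg (by omega)]
    rw [h1, h2, h3]; simp
  | succ j ih =>
    intro k hk
    have hkd : k < d := by omega
    set fk : Fin d := ⟨k, hkd⟩ with hfk
    have hfkv : (fk : Fin d).val = k := rfl
    have hdrop : (List.finRange d).drop k = fk :: (List.finRange d).drop (k+1) := by
      rw [List.drop_eq_getElem_cons (by simpa using hkd)]
      simp [hfk]
    have IH := ih (k+1) (by omega)
    set R := (((List.finRange d).drop (k+1)).map N).prod with hR
    -- rows m with m.val ≤ k of R are identity rows
    have hrow : ∀ m : Fin d, m.val ≤ k → ∀ jj : Fin d,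
        R m jj = if m = jj then (1:ℝ) else 0 := by
      intro m hm jj
      have h := congrFun (congrFun IH m) jj
      have hz : ∀ t : Fin d, Wk d A (k+1) m t = 0 := by
        intro t; simp only [Wk, Matrix.of_apply]
        rw [if_neg (by omega)]
      have hz2 : Lk d A (k+1) m jj = 0 := by
        simp only [Lk, Matrix.of_apply]
        rw [if_neg (by omega)]
      simp only [Matrix.mul_apply, Matrix.add_apply, Matrix.sub_apply,
        Matrix.one_apply] at h
      rw [Finset.sum_congr rfl (fun t _ => by rw [hz t, add_zero])] at h
      simpa [ite_mul, hz2] using h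
    -- the special matrices
    set Ek : Matrix (Fin d) (Fin d) ℝ :=
      Matrix.of (fun t jj => if t = fk then A fk jj else 0) with hEk
    set Ek' : Matrix (Fin d) (Fin d) ℝ :=
      Matrix.of (fun t jj => if t.val = k ∧ k < jj.val then A t jj else 0) with hEk'
    set Lam : Matrix (Fin d) (Fin d) ℝ :=
      Matrix.of (fun t jj => if t.val = k ∧ jj.val ≤ k then A t jj else 0) with hLam
    have hNf : N fk = 1 - Ek := by
      rw [hN]; congr 1
      ext t jj
      simp only [hEk, Matrix.mul_apply, Matrix.single, Matrix.of_apply]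
      by_cases ht : t = fk
      · subst ht
        rw [if_pos rfl, Finset.sum_eq_single fk]
        · simp
        · intro b _ hb
          rw [if_neg (by rintro ⟨_, h⟩; exact hb h.symm), zero_mul]
        · simp
      · rw [if_neg ht]
        apply Finset.sum_eq_zero
        intro b _
        rw [if_neg (by rintro ⟨h1, _⟩; exact ht h1.symm), zero_mul]
    have hcol : ∀ i : Fin d, Wk d A k i fk = 0 := by
      intro i
      simp only [Wk, Matrix.of_apply]
      split_ifs with h
      · exfalso; omega
      · rfl
    have ha : Wk d A k * Ek = 0 := by
      ext i jj
      simp only [Matrix.mul_apply, hEk, Matrix.of_apply, Matrix.zero_apply,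
        mul_ite, mul_zero]
      rw [Finset.sum_eq_single fk]
      · rw [if_pos rfl, hcol i, zero_mul]
      · intro b _ hb; rw [if_neg hb]
      · simp
    have hb : Ek = Lam + Ek' := by
      ext t jj
      have htv : (t = fk) ↔ (t.val = k) := by rw [Fin.ext_iff, hfkv]
      simp only [hEk, hLam, hEk', Matrix.of_apply, Matrix.add_apply, htv]
      have hAe : ∀ h : t.val = k, A fk jj = A t jj := fun h => by
        congr 1; exact Fin.ext (by rw [hfkv, h])
      split_ifs with h1 h2 h3 h2 h3
      all_goals try (exfalso; omega)
      all_goals try ring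
      all_goals try (exact hAe h1)
      all_goals try (rw [hAe h1]; ring)
    have hc : Wk d A k = Wk d A (k+1) + Ek' := by
      ext t jj
      simp only [Wk, hEk', Matrix.of_apply, Matrix.add_apply]
      split_ifs
      all_goals try (exfalso; omega)
      all_goals ring
    have he : Lk d A k = Lk d A (k+1) + Lam := by
      ext t jj
      simp only [Lk, hLam, Matrix.of_apply, Matrix.add_apply]
      split_ifs
      all_goals try (exfalso; omega)
      all_goals ring
    have hdd : Lam * R = Lam := by
      ext i jj
      simp only [Matrix.mul_apply, hLam, Matrix.of_apply]
      rw [Finset.sum_congr rfl (fun t _ => ?_)]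
      · rw [Finset.sum_ite_eq' Finset.univ jj
          (fun t => if i.val = k ∧ t.val ≤ k then A i t else 0)]
        simp
      · show (if i.val = k ∧ t.val ≤ k then A i t else 0) * R t jj
          = if t = jj then (if i.val = k ∧ t.val ≤ k then A i t else 0) else 0
        by_cases h1 : i.val = k ∧ t.val ≤ k
        · rw [if_pos h1, hrow t h1.2 jj]
          split_ifs <;> simp_all
        · rw [if_neg h1, zero_mul]
          split_ifs <;> simp_all
    -- put it together
    rw [hdrop]
    simp only [List.map_cons, List.prod_cons, ← hR]
    rw [← Matrix.mul_assoc]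
    have h1 : (1 + Wk d A k) * N fk = 1 + Wk d A (k+1) - Lam := by
      rw [hNf, Matrix.mul_sub, Matrix.mul_one, Matrix.add_mul, Matrix.one_mul, ha,
        add_zero, hb, hc]
      abel
    rw [h1, Matrix.sub_mul, Matrix.add_mul, Matrix.one_mul]
    have hIH' := IH
    rw [Matrix.add_mul, Matrix.one_mul] at hIH'
    rw [hIH', hdd, he]
    abel

/-- Bourbaki, Ch. V, §6, Exercise 3: For a `d × d` real matrix `A`, with
pseudo-reflexions `N i = 1 - E_{ii} * A`, `L` the lower triangular part of `A` including
the diagonal, and `W` the strictly upper triangular part of `A` (so `A = L + W`),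
one has `1 + W` invertible and `N_1 * N_2 * ⋯ * N_d = (1 + W)⁻¹ * (1 - L)`
(the Coxeter element, with `N_d` applied first). -/
theorem stmt11 (d : ℕ) (hd : 1 ≤ d)
    (A : Matrix (Fin d) (Fin d) ℝ)
    (N : Fin d → Matrix (Fin d) (Fin d) ℝ)
    (hN : ∀ i, N i = 1 - Matrix.single i i 1 * A)
    (L W : Matrix (Fin d) (Fin d) ℝ)
    (hL : L = Matrix.of fun i j : Fin d => if j ≤ i then A i j else 0)
    (hW : W = Matrix.of fun i j : Fin d => if i < j then A i j else 0) :
    IsUnit (1 + W) ∧ ((List.finRange d).map N).prod = (1 + W)⁻¹ * (1 - L) := by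
  have hW0 : W = Wk d A 0 := by
    subst hW
    ext i j
    simp only [Wk, Matrix.of_apply, Fin.lt_def, Nat.zero_le, true_and]
  have hL0 : L = Lk d A 0 := by
    subst hL
    ext i j
    simp only [Lk, Matrix.of_apply, Fin.le_def, Nat.zero_le, true_and]
  have hkey := key d A N hN d 0 (by omega)
  simp only [List.drop_zero] at hkey
  rw [← hW0, ← hL0] at hkey
  have hdet : (1 + W).det = 1 := by
    have htri : (1 + W).BlockTriangular id := by
      intro i j hij
      simp only [Matrix.add_apply, Matrix.one_apply, hW, Matrix.of_apply, id_eq] at *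
      rw [if_neg (by exact fun h => absurd h (by exact ne_of_gt hij)),
        if_neg (by exact fun h => absurd hij (not_lt.mpr h.le))]
      ring
    rw [Matrix.det_of_upperTriangular htri]
    apply Finset.prod_eq_one
    intro i _
    simp [hW]
  have hunit : IsUnit (1 + W) := by
    rw [Matrix.isUnit_iff_isUnit_det, hdet]
    exact isUnit_one
  refine ⟨hunit, ?_⟩
  have hinv : (1 + W)⁻¹ * (1 + W) = 1 :=
    Matrix.nonsing_inv_mul _ (by rw [hdet]; exact isUnit_one)
  calc ((List.finRange d).map N).prod
      = (1 + W)⁻¹ * ((1 + W) * ((List.finRange d).map N).prod) := by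
        rw [← Matrix.mul_assoc, hinv, Matrix.one_mul]
    _ = (1 + W)⁻¹ * (1 - L) := by rw [hkey]
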